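/- Let q(c) = z(ω, c) − c be the displacement function of z' = zⁿ + P₁(t)z^{n-1} + ⋯ + P_{n-1}(t)z (P_n ≡ 0, real continuous coefficients, ω > 0), restricted to real c. If ρ is such that every real solution with z(t₀) ≥ ρ at some t₀ ∈ [0,ω] satisfies z' ≥ ½zⁿ while z ≥ ρ, then every real zero of q lies in [−ρ', ρ'] for some ρ' depending only on ρ, n, ω; in particular, the set of positive real c with z(·, c) periodic is bounded. -/

import Mathlib

open Set Filter

/-- If the derivative is strictly positive whenever `R ≤ z t`, and `R ≤ z 0`,
then `z 0 < z ω`. -/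
lemma up19 (ω R : ℝ) (hω : 0 < ω) (z g : ℝ → ℝ)
    (hz : ∀ t ∈ Set.Icc (0:ℝ) ω, HasDerivAt z (g t) t)
    (hg : ∀ t ∈ Set.Icc (0:ℝ) ω, R ≤ z t → 0 < g t)
    (h0 : R ≤ z 0) : z 0 < z ω := by
  have hinv : ∀ t ∈ Set.Icc (0:ℝ) ω, R ≤ z t := by
    by_contra h
    push_neg at h
    obtain ⟨t₀, ht₀, hzt₀⟩ := h
    set S : Set ℝ := {t | t ∈ Set.Icc (0:ℝ) ω ∧ z t < R} with hSdef
    have hSne : S.Nonempty := ⟨t₀, ht₀, hzt₀⟩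
    have hSbd : BddBelow S := ⟨0, fun x hx => hx.1.1⟩
    set s := sInf S with hs
    have hs0 : 0 ≤ s := le_csInf hSne fun x hx => hx.1.1
    have hsω : s ≤ ω := le_trans (csInf_le hSbd ⟨ht₀, hzt₀⟩) ht₀.2
    have hsIcc : s ∈ Set.Icc (0:ℝ) ω := ⟨hs0, hsω⟩
    -- z s ≥ R
    have hzs_ge : R ≤ z s := by
      rcases eq_or_lt_of_le hs0 with h | h
      · rw [← h]; exact h0
      · have htend : Filter.Tendsto z (nhdsWithin s (Set.Iio s)) (nhds (z s)) :=
          (hz s hsIcc).continuousAt.continuousWithinAt.tendsto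
        have hev : ∀ᶠ t in nhdsWithin s (Set.Iio s), R ≤ z t := by
          have h1 : ∀ᶠ t in nhdsWithin s (Set.Iio s), 0 < t :=
            eventually_nhdsWithin_of_eventually_nhds (eventually_gt_nhds h)
          filter_upwards [h1, eventually_mem_nhdsWithin] with t ht1 ht2
          have htIcc : t ∈ Set.Icc (0:ℝ) ω := ⟨ht1.le, le_trans (le_of_lt ht2) hsω⟩
          by_contra hlt
          push_neg at hlt
          exact absurd (csInf_le hSbd ⟨htIcc, hlt⟩) (not_le.mpr ht2)
        exact ge_of_tendsto htend hev
    -- z s ≤ R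
    have hzs_le : z s ≤ R := by
      have hcl : s ∈ closure S := csInf_mem_closure hSne hSbd
      have hne : (nhdsWithin s S).NeBot := mem_closure_iff_nhdsWithin_neBot.mp hcl
      have htend : Filter.Tendsto z (nhdsWithin s S) (nhds (z s)) :=
        (hz s hsIcc).continuousAt.continuousWithinAt.tendsto
      have hev : ∀ᶠ t in nhdsWithin s S, z t ≤ R := by
        filter_upwards [eventually_mem_nhdsWithin] with t ht
        exact ht.2.le
      exact le_of_tendsto htend hev
    have hzs : z s = R := le_antisymm hzs_le hzs_ge
    have hgs : 0 < g s := hg s hsIcc hzs_ge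
    -- slope is eventually positive to the right of s
    have hslope : Filter.Tendsto (slope z s) (nhdsWithin s {s}ᶜ) (nhds (g s)) :=
      hasDerivAt_iff_tendsto_slope.mp (hz s hsIcc)
    have hev1 : ∀ᶠ t in nhdsWithin s {s}ᶜ, 0 < slope z s t :=
      hslope.eventually (eventually_gt_nhds hgs)
    have hev2 : ∀ᶠ t in nhdsWithin s (Set.Ioi s), 0 < slope z s t :=
      hev1.filter_mono (nhdsWithin_mono s fun x hx => ne_of_gt hx)
    obtain ⟨u, hu, huS⟩ := mem_nhdsGT_iff_exists_Ioo_subset.mp hev2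
    obtain ⟨x, hxS, hxu⟩ := (csInf_lt_iff hSbd hSne).mp hu
    have hxs : s ≤ x := csInf_le hSbd hxS
    have hxs' : s < x := by
      rcases eq_or_lt_of_le hxs with h | h
      · exact absurd hxS.2 (by rw [← h, hzs]; exact lt_irrefl R)
      · exact h
    have hx : 0 < slope z s x := huS ⟨hxs', hxu⟩
    rw [slope_def_field] at hx
    have : z s < z x := by
      have h1 : 0 < x - s := sub_pos.mpr hxs'
      have h2 := mul_pos hx h1
      rw [div_mul_cancel₀ _ (ne_of_gt h1)] at h2
      linarith
    rw [hzs] at this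
    exact absurd hxS.2 (not_lt.mpr this.le)
  -- strict monotonicity
  have hcont : ContinuousOn z (Set.Icc 0 ω) :=
    fun t ht => (hz t ht).continuousAt.continuousWithinAt
  have hmono : StrictMonoOn z (Set.Icc 0 ω) := by
    apply strictMonoOn_of_deriv_pos (convex_Icc 0 ω) hcont
    intro x hx
    rw [interior_Icc] at hx
    have hx' : x ∈ Set.Icc (0:ℝ) ω := ⟨hx.1.le, hx.2.le⟩
    rw [(hz x hx').deriv]
    exact hg x hx' (hinv x hx')
  exact hmono ⟨le_refl 0, hω.le⟩ ⟨hω.le, le_refl ω⟩ hω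

theorem stmt_19 (n : ℕ) (hn : 2 ≤ n) (ω ρ : ℝ) (hω : 0 < ω) (hρ : 0 < ρ)
    (P : ℕ → ℝ → ℝ) (hP : ∀ i, Continuous (P i))
    (hρ' : ∀ x : ℝ, ∀ t ∈ Set.Icc (0 : ℝ) ω, ρ ≤ x →
      (1 / 2) * x ^ n ≤ x ^ n + ∑ i ∈ Finset.Icc 1 (n - 1), P i t * x ^ (n - i)) :
    ∃ ρ' > 0, ∀ z : ℝ → ℝ,
      (∀ t ∈ Set.Icc (0 : ℝ) ω, HasDerivAt z
        ((z t) ^ n + ∑ i ∈ Finset.Icc 1 (n - 1), P i t * (z t) ^ (n - i)) t) →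
      z ω = z 0 → |z 0| ≤ ρ' := by
  -- bound the coefficients
  set F : ℝ → ℝ := fun t => ∑ i ∈ Finset.Icc 1 (n-1), |P i t| with hF
  have hFcont : Continuous F := continuous_finset_sum _ fun i _ => (hP i).abs
  obtain ⟨t₁, ht₁, hMax⟩ := isCompact_Icc.exists_isMaxOn (α := ℝ)
    ⟨0, le_refl 0, hω.le⟩ hFcont.continuousOn
  replace hMax : ∀ t ∈ Set.Icc (0:ℝ) ω, F t ≤ F t₁ := fun t ht => hMax ht
  set M := F t₁ with hM
  have hM0 : 0 ≤ M := Finset.sum_nonneg fun i _ => abs_nonneg _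
  set R := max ρ M + 1 with hR
  have hR0 : 0 < R := by positivity
  have hR1 : 1 ≤ R := by
    have : 0 ≤ max ρ M := le_trans hM0 (le_max_right _ _)
    linarith
  have hRρ : ρ ≤ R := by have := le_max_left ρ M; linarith
  have hRM : M < R := by have := le_max_right ρ M; linarith
  refine ⟨R, hR0, ?_⟩
  intro z hz hper
  set g : ℝ → ℝ := fun t => (z t) ^ n + ∑ i ∈ Finset.Icc 1 (n - 1), P i t * (z t) ^ (n - i)
    with hg
  have hn1 : n - 1 + 1 = n := by omega
  -- sum bound
  have hsum : ∀ t ∈ Set.Icc (0:ℝ) ω, ∀ x : ℝ, 1 ≤ |x| →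
      |∑ i ∈ Finset.Icc 1 (n-1), P i t * x ^ (n - i)| ≤ M * |x| ^ (n - 1) := by
    intro t ht x hx
    calc |∑ i ∈ Finset.Icc 1 (n-1), P i t * x ^ (n - i)|
        ≤ ∑ i ∈ Finset.Icc 1 (n-1), |P i t * x ^ (n - i)| :=
          Finset.abs_sum_le_sum_abs _ _
      _ = ∑ i ∈ Finset.Icc 1 (n-1), |P i t| * |x| ^ (n - i) := by
          simp [abs_mul, abs_pow]
      _ ≤ ∑ i ∈ Finset.Icc 1 (n-1), |P i t| * |x| ^ (n - 1) := by
          apply Finset.sum_le_sum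
          intro i hi
          have hi' := Finset.mem_Icc.mp hi
          have : n - i ≤ n - 1 := Nat.sub_le_sub_left hi'.1 n
          exact mul_le_mul_of_nonneg_left (pow_le_pow_right₀ hx this) (abs_nonneg _)
      _ = F t * |x| ^ (n - 1) := by rw [hF, Finset.sum_mul]
      _ ≤ M * |x| ^ (n - 1) := by
          apply mul_le_mul_of_nonneg_right (hMax t ht)
          positivity
  -- positivity of g above R
  have hpos : ∀ t ∈ Set.Icc (0:ℝ) ω, R ≤ z t → 0 < g t := by
    intro t ht hzt
    have hz0 : 0 < z t := lt_of_lt_of_le hR0 hzt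
    have := hρ' (z t) t ht (le_trans hRρ hzt)
    have h2 : 0 < (1/2 : ℝ) * (z t) ^ n := by positivity
    exact lt_of_lt_of_le h2 this
  by_contra hc
  push_neg at hc
  rcases lt_abs.mp hc with hA | hB
  · -- z 0 > R : use up19 directly
    have := up19 ω R hω z g hz hpos hA.le
    rw [hper] at this
    exact lt_irrefl _ this
  · -- z 0 < -R
    have hB' : z 0 < -R := by linarith
    rcases Nat.even_or_odd n with heven | hodd
    · -- n even: g > 0 below -R ; use time-reversed reflected solution
      have gpos : ∀ t ∈ Set.Icc (0:ℝ) ω, z t ≤ -R → 0 < g t := by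
        intro t ht hzt
        set x := z t with hx
        have hxneg : x < 0 := lt_of_le_of_lt hzt (by linarith)
        have habs : |x| = -x := abs_of_neg hxneg
        have hxR : R ≤ |x| := by rw [habs]; linarith
        have hx1 : 1 ≤ |x| := le_trans hR1 hxR
        have hS := hsum t ht x hx1
        have hA0 : (0:ℝ) < |x| ^ (n-1) := by positivity
        have hxn : x ^ n = |x| ^ (n-1) * |x| := by
          rw [← pow_succ, hn1, Even.pow_abs heven]
        have hSlb : -(M * |x| ^ (n-1)) ≤ ∑ i ∈ Finset.Icc 1 (n-1), P i t * x ^ (n - i) :=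
          neg_le_of_abs_le hS
        have hMx : M < |x| := lt_of_lt_of_le hRM hxR
        have key : 0 < |x| ^ (n-1) * (|x| - M) := mul_pos hA0 (by linarith)
        simp only [hg]
        nlinarith [key, hSlb, hxn]
      -- w t = -z (ω - t)
      set w : ℝ → ℝ := fun t => -z (ω - t) with hw
      set gw : ℝ → ℝ := fun t => g (ω - t) with hgw
      have hwz : ∀ t ∈ Set.Icc (0:ℝ) ω, HasDerivAt w (gw t) t := by
        intro t ht
        have hmem : ω - t ∈ Set.Icc (0:ℝ) ω := ⟨by linarith [ht.2], by linarith [ht.1]⟩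
        have h1 : HasDerivAt (fun s : ℝ => ω - s) (-1) t := by
          simpa using (hasDerivAt_id t).const_sub ω
        have h2 := HasDerivAt.comp t (hz (ω - t) hmem) h1
        have h3 := h2.neg
        have h4 : HasDerivAt w (-(g (ω - t) * -1)) t := h3
        rw [mul_neg_one, neg_neg] at h4
        exact h4
      have hwg : ∀ t ∈ Set.Icc (0:ℝ) ω, R ≤ w t → 0 < gw t := by
        intro t ht hwt
        have hmem : ω - t ∈ Set.Icc (0:ℝ) ω := ⟨by linarith [ht.2], by linarith [ht.1]⟩
        exact gpos (ω - t) hmem (by simp only [hw] at hwt; linarith)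
      have hw0 : R ≤ w 0 := by simp only [hw, sub_zero, hper]; linarith
      have := up19 ω R hω w gw hwz hwg hw0
      simp only [hw, sub_zero, sub_self, hper] at this
      exact lt_irrefl _ this
    · -- n odd: g < 0 below -R ; use reflected solution
      have gneg : ∀ t ∈ Set.Icc (0:ℝ) ω, z t ≤ -R → g t < 0 := by
        intro t ht hzt
        set x := z t with hx
        have hxneg : x < 0 := lt_of_le_of_lt hzt (by linarith)
        have habs : |x| = -x := abs_of_neg hxneg
        have hxR : R ≤ |x| := by rw [habs]; linarith
        have hx1 : 1 ≤ |x| := le_trans hR1 hxR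
        have hS := hsum t ht x hx1
        have hA0 : (0:ℝ) < |x| ^ (n-1) := by positivity
        have hxn : x ^ n = -(|x| ^ (n-1) * |x|) := by
          rw [← pow_succ, hn1, habs, Odd.neg_pow hodd, neg_neg]
        have hSub : ∑ i ∈ Finset.Icc 1 (n-1), P i t * x ^ (n - i) ≤ M * |x| ^ (n-1) :=
          le_of_abs_le hS
        have hMx : M < |x| := lt_of_lt_of_le hRM hxR
        have key : 0 < |x| ^ (n-1) * (|x| - M) := mul_pos hA0 (by linarith)
        simp only [hg]
        nlinarith [key, hSub, hxn]
      set w : ℝ → ℝ := fun t => -z t with hw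
      set gw : ℝ → ℝ := fun t => -g t with hgw
      have hwz : ∀ t ∈ Set.Icc (0:ℝ) ω, HasDerivAt w (gw t) t :=
        fun t ht => (hz t ht).neg
      have hwg : ∀ t ∈ Set.Icc (0:ℝ) ω, R ≤ w t → 0 < gw t := by
        intro t ht hwt
        simp only [hgw, neg_pos]
        exact gneg t ht (by simp only [hw] at hwt; linarith)
      have hw0 : R ≤ w 0 := by simp only [hw]; linarith
      have := up19 ω R hω w gw hwz hwg hw0
      simp only [hw, hper] at this
      exact lt_irrefl _ this
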